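/- Let h_k, g_k : (−1,0] → S²(V) be smooth families of inner products on a 2-dimensional vector space V with g_0 = h_0, derivative of g_k at k=0 equal to 0, and derivative of h_k at 0 equal to ḣ_0 = −(1/2)h_0 − Re q_0 for some symmetric traceless (w.r.t. h_0) bilinear form Re q_0. Then d/dk|_{k=0} tr_{g_k}(h_k) = tr_{g_0}(ḣ_0) = −1, and lim_{k→0} (−2√(k+1)/k)·( h_k − (tr_{g_k}(h_k)/2)·g_k ) = 2·Re q_0. -/

import Mathlib

open Matrix

lemma trace_inv_mul_fin_two (A B : Matrix (Fin 2) (Fin 2) ℝ) :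
    Matrix.trace (A⁻¹ * B) =
      (A 1 1 * B 0 0 - A 0 1 * B 1 0 - A 1 0 * B 0 1 + A 0 0 * B 1 1) /
        (A 0 0 * A 1 1 - A 0 1 * A 1 0) := by
  rw [Matrix.inv_def, Ring.inverse_eq_inv, Matrix.smul_mul, Matrix.trace_smul,
    Matrix.adjugate_fin_two, Matrix.det_fin_two]
  simp [Matrix.trace_fin_two, Matrix.mul_apply, Matrix.vecMul, dotProduct, Matrix.vecHead, Matrix.vecTail,
    Fin.sum_univ_two, div_eq_mul_inv]
  ring


/-- Asymptotics of the rescaled fundamental forms (core of Corollary 2.4): if `h_k`,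
`g_k` are families of inner products (Gram matrices) on a 2-dimensional space with
`g_0 = h_0`, `ġ_0 = 0`, `ḣ_0 = −(1/2)h_0 − Re q_0` where `Re q_0` is symmetric and
`h_0`-traceless, then `d/dk|₀ tr_{g_k}(h_k) = −1` and
`(−2√(k+1)/k)·(h_k − (tr_{g_k}(h_k)/2)·g_k) → 2·Re q_0` as `k → 0⁻`. -/
theorem stmt_16 (h g : ℝ → Matrix (Fin 2) (Fin 2) ℝ)
    (Q : Matrix (Fin 2) (Fin 2) ℝ)
    (hposh : ∀ k ∈ Set.Ioc (-1 : ℝ) 0, (h k).PosDef)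
    (hposg : ∀ k ∈ Set.Ioc (-1 : ℝ) 0, (g k).PosDef)
    (heq : g 0 = h 0)
    (hgd : ∀ i j, HasDerivAt (fun k => g k i j) 0 0)
    (hhd : ∀ i j, HasDerivAt (fun k => h k i j) (((-(1 / 2 : ℝ)) • h 0 - Q) i j) 0)
    (hQsym : Qᵀ = Q) (hQtr : Matrix.trace ((h 0)⁻¹ * Q) = 0) :
    HasDerivAt (fun k => Matrix.trace ((g k)⁻¹ * h k)) (-1) 0 ∧
    Filter.Tendsto
      (fun k : ℝ => ((-2) * Real.sqrt (k + 1) / k) •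
        (h k - (Matrix.trace ((g k)⁻¹ * h k) / 2) • g k))
      (nhdsWithin 0 (Set.Iio 0)) (nhds ((2 : ℝ) • Q)) := by
  have h0pd : (h 0).PosDef := hposh 0 ⟨by norm_num, le_refl 0⟩
  have hdet : (h 0).det ≠ 0 := ne_of_gt h0pd.det_pos
  have hdet2 : h 0 0 0 * h 0 1 1 - h 0 0 1 * h 0 1 0 ≠ 0 := by
    rw [← Matrix.det_fin_two]; exact hdet
  have hg0 : ∀ i j, g 0 i j = h 0 i j := fun i j => by rw [heq]
  -- traceless condition in scalar form
  have hQtr' : h 0 1 1 * Q 0 0 - h 0 0 1 * Q 1 0 - h 0 1 0 * Q 0 1 + h 0 0 0 * Q 1 1 = 0 := by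
    have := hQtr
    rw [trace_inv_mul_fin_two, div_eq_zero_iff] at this
    tauto
  -- scalar form of derivative of h
  have hh' : ∀ i j, HasDerivAt (fun k => h k i j) (-(1 / 2 : ℝ) * h 0 i j - Q i j) 0 := by
    intro i j
    simpa [Matrix.sub_apply, Matrix.smul_apply, smul_eq_mul] using hhd i j
  -- rewrite trace as a rational function
  have hteq : ∀ k, Matrix.trace ((g k)⁻¹ * h k) =
      (g k 1 1 * h k 0 0 - g k 0 1 * h k 1 0 - g k 1 0 * h k 0 1 + g k 0 0 * h k 1 1) /
        (g k 0 0 * g k 1 1 - g k 0 1 * g k 1 0) := fun k => trace_inv_mul_fin_two _ _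
  -- derivative of denominator
  have hD : HasDerivAt (fun k => g k 0 0 * g k 1 1 - g k 0 1 * g k 1 0) 0 0 := by
    simpa using ((hgd 0 0).fun_mul (hgd 1 1)).fun_sub ((hgd 0 1).fun_mul (hgd 1 0))
  have hDne : g 0 0 0 * g 0 1 1 - g 0 0 1 * g 0 1 0 ≠ 0 := by
    simp only [hg0]; exact hdet2
  -- derivative of numerator
  have hN := ((((hgd 1 1).fun_mul (hh' 0 0)).fun_sub ((hgd 0 1).fun_mul (hh' 1 0))).fun_sub
      ((hgd 1 0).fun_mul (hh' 0 1))).fun_add ((hgd 0 0).fun_mul (hh' 1 1))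
  have hND := hN.fun_div hD hDne
  have ht : HasDerivAt (fun k => Matrix.trace ((g k)⁻¹ * h k)) (-1) 0 := by
    simp only [hteq]
    refine hND.congr_deriv (Eq.symm ?_)
    simp only [hg0]
    rw [eq_div_iff (pow_ne_zero 2 hdet2)]
    linear_combination (h 0 0 0 * h 0 1 1 - h 0 0 1 * h 0 1 0) * hQtr'
  refine ⟨ht, ?_⟩
  -- value of the trace at 0
  have ht0 : Matrix.trace ((g 0)⁻¹ * h 0) = 2 := by
    rw [heq, Matrix.nonsing_inv_mul _ (isUnit_iff_ne_zero.mpr hdet), Matrix.trace_one]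
    simp
  rw [show ((2 : ℝ) • Q) = Matrix.of (fun i j => 2 * Q i j) by
    ext i j; simp [Matrix.smul_apply]]
  refine tendsto_pi_nhds.mpr ?_
  intro i
  rw [tendsto_pi_nhds]
  intro j
  -- the entrywise function F
  set F : ℝ → ℝ := fun k => h k i j - (Matrix.trace ((g k)⁻¹ * h k) / 2) * g k i j with hFdef
  have hF0 : F 0 = 0 := by
    simp only [hFdef, ht0, hg0]
    ring
  have hF : HasDerivAt F (-Q i j) 0 := by
    have := (hh' i j).fun_sub (((ht.div_const 2).fun_mul (hgd i j)))
    refine this.congr_deriv (Eq.symm ?_)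
    simp only [hg0, ht0]
    ring
  have hslope := (hasDerivAt_iff_tendsto_slope.mp hF).mono_left
    (nhdsWithin_mono _ (fun x (hx : x ∈ Set.Iio 0) => ne_of_lt hx))
  have hsqrt : Filter.Tendsto (fun k : ℝ => (-2 : ℝ) * Real.sqrt (k + 1))
      (nhdsWithin 0 (Set.Iio 0)) (nhds (-2)) := by
    have hc : Continuous fun k : ℝ => (-2 : ℝ) * Real.sqrt (k + 1) := by
      continuity
    have := hc.tendsto 0
    simp only [zero_add, Real.sqrt_one, mul_one] at this
    exact this.mono_left nhdsWithin_le_nhds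
  have hcomb := hsqrt.mul hslope
  have hval : (-2 : ℝ) * (-Q i j) = 2 * Q i j := by ring
  rw [hval] at hcomb
  apply hcomb.congr'
  filter_upwards [self_mem_nhdsWithin] with k hk
  rw [slope_def_field, hF0, sub_zero]
  simp only [Matrix.smul_apply, Matrix.sub_apply, smul_eq_mul, Matrix.of_apply, hFdef]
  ring
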